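/- Let n ≥ 0, let M be a separable metrizable space homeomorphic to the Nöbeling space N_n^{2n+1}, and let X ⊆ M be a subspace such that {f ∈ C([0,1]^n, M) : f([0,1]^n) ⊆ X} is dense in C([0,1]^n, M) with the compact-open topology. If A and B are G_δ-subsets of M with X ⊆ A ⊆ B, then B − A is a Z_σ-set in the subspace B. -/
import Mathlib


open Set Topology TopologicalSpace

/-- The cube `[0,1]^k`. -/
abbrev Cube (k : ℕ) : Type := Fin k → unitInterval

/-- The boundary `∂[0,1]^k` of the cube: points with some coordinate equal to `0` or `1`. -/
def cubeBoundary (k : ℕ) : Set (Cube k) := {x | ∃ i, x i = 0 ∨ x i = 1}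

/-- The Nöbeling space `N_n^{2n+1}`: the set of points of `ℝ^{2n+1}` having at most `n`
rational coordinates. -/
def NobelingSpace (n : ℕ) : Set (Fin (2 * n + 1) → ℝ) :=
  {x | Set.ncard {i | ∃ q : ℚ, x i = (q : ℝ)} ≤ n}

/-- `𝒰` is an open cover of `Y`. -/
def IsOpenCover {Y : Type*} [TopologicalSpace Y] (𝒰 : Set (Set Y)) : Prop :=
  (∀ U ∈ 𝒰, IsOpen U) ∧ ⋃₀ 𝒰 = Set.univ

/-- Two maps `f g : Z → Y` are `𝒰`-close. -/
def UClose {Z Y : Type*} (𝒰 : Set (Set Y)) (f g : Z → Y) : Prop :=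
  ∀ z, ∃ U ∈ 𝒰, f z ∈ U ∧ g z ∈ U

/-- `A` is a `Z`-set in `Y` in the `n`-dimensional sense. -/
def IsZSet (n : ℕ) {Y : Type*} [TopologicalSpace Y] (A : Set Y) : Prop :=
  IsClosed A ∧ Dense {f : C(Cube n, Y) | Set.range ⇑f ∩ A = ∅}

/-- A `Z_σ`-set: countable union of `Z`-sets. -/
def IsZSigmaSet (n : ℕ) {Y : Type*} [TopologicalSpace Y] (A : Set Y) : Prop :=
  ∃ F : ℕ → Set Y, (∀ i, IsZSet n (F i)) ∧ A = ⋃ i, F i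

/-- A strong `Z`-set. -/
def IsStrongZSet (n : ℕ) {X : Type*} [TopologicalSpace X] (A : Set X) : Prop :=
  IsClosed A ∧ ∀ 𝒰 : Set (Set X), IsOpenCover 𝒰 →
    ∃ g : C(X, X), UClose 𝒰 ⇑g id ∧ closure (Set.range ⇑g) ∩ A = ∅

/-- The discrete `n`-cells property. -/
def DiscreteNCellsProperty (n : ℕ) (X : Type*) [TopologicalSpace X] : Prop :=
  ∀ f : C(Cube n × ℕ, X), ∀ 𝒰 : Set (Set X), IsOpenCover 𝒰 →
    ∃ g : C(Cube n × ℕ, X), UClose 𝒰 ⇑g ⇑f ∧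
      ∀ x : X, ∃ V ∈ nhds x, {k : ℕ | ∃ c : Cube n, g (c, k) ∈ V}.Subsingleton

/-- `X` is `LC^{n-1}`: local extension of maps on `∂[0,1]^k` for all `k ≤ n`. -/
def IsLCUpTo (n : ℕ) (X : Type*) [TopologicalSpace X] : Prop :=
  ∀ k ≤ n, ∀ x : X, ∀ U ∈ nhds x, ∃ V ∈ nhds x,
    ∀ f : C(cubeBoundary k, X), (∀ z, f z ∈ V) →
      ∃ F : C(Cube k, X), (∀ z, F z ∈ U) ∧ ∀ z : cubeBoundary k, F z = f z

/-- `X` is `C^{n-1}`: maps on `∂[0,1]^k` extend over `[0,1]^k`, for all `k ≤ n`. -/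
def IsCUpTo (n : ℕ) (X : Type*) [TopologicalSpace X] : Prop :=
  ∀ k ≤ n, ∀ f : C(cubeBoundary k, X),
    ∃ F : C(Cube k, X), ∀ z : cubeBoundary k, F z = f z

/-- `X ⊆ M` is `LC^{n-1}` relative to `M`. -/
def IsLCRelUpTo (n : ℕ) {M : Type*} [TopologicalSpace M] (X : Set M) : Prop :=
  ∀ k ≤ n, ∀ x : M, ∀ U ∈ nhds x, ∃ V ∈ nhds x,
    ∀ f : C(cubeBoundary k, M), (∀ z, f z ∈ V ∩ X) →
      ∃ F : C(Cube k, M), (∀ z, F z ∈ U ∩ X) ∧ ∀ z : cubeBoundary k, F z = f z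

/-- Covering dimension `≤ n`. -/
def CovDimLE (X : Type*) [TopologicalSpace X] (n : ℕ) : Prop :=
  ∀ 𝒰 : Set (Set X), 𝒰.Finite → (∀ U ∈ 𝒰, IsOpen U) → ⋃₀ 𝒰 = Set.univ →
    ∃ 𝒱 : Set (Set X), 𝒱.Finite ∧ (∀ V ∈ 𝒱, IsOpen V) ∧ ⋃₀ 𝒱 = Set.univ ∧
      (∀ V ∈ 𝒱, ∃ U ∈ 𝒰, V ⊆ U) ∧
      ∀ x : X, Set.ncard {V | V ∈ 𝒱 ∧ x ∈ V} ≤ n + 1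

/-- Covering dimension equal to `n`: `≤ n` but not `≤ m` for any `m < n`. -/
def CovDimEq (X : Type*) [TopologicalSpace X] (n : ℕ) : Prop :=
  CovDimLE X n ∧ ∀ m : ℕ, m + 1 ≤ n → ¬ CovDimLE X m

/-- `X` is an absolute extensor in dimension `n`. -/
def IsAEn (n : ℕ) (X : Type*) [TopologicalSpace X] : Prop :=
  ∀ (Z : Type) [TopologicalSpace Z] [MetrizableSpace Z], CovDimLE Z n →
    ∀ A : Set Z, IsClosed A → ∀ f : C(A, X),
      ∃ F : C(Z, X), ∀ a : A, F a = f a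

/-- A `Z`-embedding: an embedding whose range is a `Z`-set. -/
def IsZEmbedding (n : ℕ) {C X : Type*} [TopologicalSpace C] [TopologicalSpace X]
    (g : C → X) : Prop :=
  IsEmbedding g ∧ IsZSet n (Set.range g)

/-- `X` is strongly `K`-universal. -/
def StronglyUniversal (n : ℕ) (K : (Z : Type) → TopologicalSpace Z → Prop)
    (X : Type*) [TopologicalSpace X] : Prop :=
  ∀ (C : Type) [tC : TopologicalSpace C], K C tC →
    ∀ f : C(C, X), ∀ D : Set C, IsClosed D →
      IsZEmbedding n (fun d : D => f d) →
      ∀ 𝒰 : Set (Set X), IsOpenCover 𝒰 →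
        ∃ g : C(C, X), IsZEmbedding n ⇑g ∧ (∀ d ∈ D, g d = f d) ∧ UClose 𝒰 ⇑g ⇑f

/-- `X` is a `K`-absorbing set (`X` is `n`-dimensional, an `AE(n)`, a countable union of
strong `Z`-sets, a countable union of subspaces from `K`, and strongly `K`-universal). -/
def IsAbsorbingSet (n : ℕ) (K : (Z : Type) → TopologicalSpace Z → Prop)
    (X : Type) [TopologicalSpace X] : Prop :=
  CovDimEq X n ∧ IsAEn n X ∧
  (∃ A : ℕ → Set X, (∀ i, IsStrongZSet n (A i)) ∧ ⋃ i, A i = Set.univ) ∧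
  (∃ A : ℕ → Set X, (∀ i, K (A i) inferInstance) ∧ ⋃ i, A i = Set.univ) ∧
  StronglyUniversal n K X

/-- `K` is a class of separable metrizable spaces. -/
def IsSepMetrClass (K : (Z : Type) → TopologicalSpace Z → Prop) : Prop :=
  ∀ (Z : Type) (tZ : TopologicalSpace Z), K Z tZ →
    @MetrizableSpace Z tZ ∧ @SeparableSpace Z tZ

/-- `K` is topological: closed under homeomorphisms. -/
def IsTopologicalClass (K : (Z : Type) → TopologicalSpace Z → Prop) : Prop :=
  ∀ (Z₁ : Type) [t₁ : TopologicalSpace Z₁] (Z₂ : Type) [t₂ : TopologicalSpace Z₂],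
    K Z₁ t₁ → Nonempty (Z₁ ≃ₜ Z₂) → K Z₂ t₂

/-- `K` is finitely additive: a space covered by finitely many closed subspaces from `K`
belongs to `K`. -/
def IsFinitelyAdditiveClass (K : (Z : Type) → TopologicalSpace Z → Prop) : Prop :=
  ∀ (Z : Type) [tZ : TopologicalSpace Z] (m : ℕ) (A : Fin m → Set Z),
    (∀ i, IsClosed (A i)) → (⋃ i, A i) = Set.univ →
    (∀ i, K (A i) inferInstance) → K Z tZ

/-- `K` is hereditary with respect to closed subspaces. -/
def IsClosedHereditaryClass (K : (Z : Type) → TopologicalSpace Z → Prop) : Prop :=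
  ∀ (Z : Type) [tZ : TopologicalSpace Z], K Z tZ →
    ∀ A : Set Z, IsClosed A → K (↥A) inferInstance

/-- `B ⊆ Y` is locally `n`-negligible. -/
def LocallyNNegligible (n : ℕ) {Y : Type*} [TopologicalSpace Y] (B : Set Y) : Prop :=
  ∀ U : Set Y, IsOpen U → ∀ k ≤ n,
    Dense {f : C(Cube k, ↥U) | Set.range (fun z => (f z : Y)) ∩ B = ∅}

/-- The Borelian classes of subsets of a space: `Borelian true α` is the additive class
`𝒜_α` and `Borelian false α` is the multiplicative class `ℳ_α`. -/
inductive Borelian {X : Type} [TopologicalSpace X] : Bool → Ordinal.{0} → Set X → Prop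
  | isOpen {s : Set X} (h : IsOpen s) : Borelian true 0 s
  | isClosed {s : Set X} (h : IsClosed s) : Borelian false 0 s
  | iUnion {α : Ordinal} (hα : α ≠ 0) (f : ℕ → Set X) (β : ℕ → Ordinal)
      (hβ : ∀ i, β i < α) (h : ∀ i, Borelian false (β i) (f i)) :
      Borelian true α (⋃ i, f i)
  | iInter {α : Ordinal} (hα : α ≠ 0) (f : ℕ → Set X) (β : ℕ → Ordinal)
      (hβ : ∀ i, β i < α) (h : ∀ i, Borelian true (β i) (f i)) :
      Borelian false α (⋂ i, f i)

/-- `Z` belongs to the absolute additive (`b = true`) resp. multiplicative (`b = false`)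
Borelian class `α`: every embedding into a Polish space has image of class `α`. -/
def InAbsoluteBorelClass (b : Bool) (α : Ordinal) (Z : Type) [tZ : TopologicalSpace Z] :
    Prop :=
  ∀ (P : Type) [TopologicalSpace P] [PolishSpace P], ∀ e : Z → P,
    IsEmbedding e → Borelian b α (Set.range e)

/-- The class `ℳ_α(n)` (`b = false`) resp. `𝒜_α(n)` (`b = true`): separable metrizable
spaces of covering dimension `≤ n` in the corresponding absolute Borelian class. -/
def BorelClassDim (b : Bool) (α : Ordinal) (n : ℕ) :
    (Z : Type) → TopologicalSpace Z → Prop :=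
  fun Z tZ => @MetrizableSpace Z tZ ∧ @SeparableSpace Z tZ ∧
    @InAbsoluteBorelClass b α Z tZ ∧ @CovDimLE Z tZ n

theorem statement3 (n : ℕ) (M : Type) [TopologicalSpace M] [MetrizableSpace M]
    [SeparableSpace M] (hM : Nonempty (M ≃ₜ ↥(NobelingSpace n))) (X : Set M)
    (hX : Dense {f : C(Cube n, M) | Set.range ⇑f ⊆ X})
    (A B : Set M) (hA : IsGδ A) (hB : IsGδ B) (hXA : X ⊆ A) (hAB : A ⊆ B) :
    IsZSigmaSet n {b : ↥B | (b : M) ∈ B \ A} := by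
  
  obtain ⟨U, hUopen, hAU⟩ := hA.eq_iInter_nat
  refine ⟨fun i => Subtype.val ⁻¹' (U i)ᶜ, fun i => ?_, ?_⟩
  · constructor
    · exact (hUopen i).isClosed_compl.preimage continuous_subtype_val
    · set e : C(Cube n, ↥B) → C(Cube n, M) :=
        fun f => (⟨Subtype.val, continuous_subtype_val⟩ : C(↥B, M)).comp f with he
      have hind : IsInducing e :=
        ContinuousMap.isInducing_postcomp _ IsInducing.subtypeVal
      set S : Set C(Cube n, M) := {f | Set.range ⇑f ⊆ X} with hS
      have hSsub : S ⊆ Set.range e := by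
        intro f hf
        refine ⟨⟨fun z => ⟨f z, hAB (hXA (hf ⟨z, rfl⟩))⟩, by fun_prop⟩, by ext z; rfl⟩
      have hdense : Dense (e ⁻¹' S) := by
        have : closure (e ⁻¹' S) = e ⁻¹' closure S := by
          rw [hind.closure_eq_preimage_closure_image,
            Set.image_preimage_eq_inter_range, Set.inter_eq_left.2 hSsub]
        rw [dense_iff_closure_eq, this, hX.closure_eq, Set.preimage_univ]
      refine hdense.mono ?_
      intro f hf
      simp only [Set.mem_setOf_eq]
      ext b
      simp only [Set.mem_inter_iff, Set.mem_range, Set.mem_preimage, Set.mem_compl_iff,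
        Set.mem_empty_iff_false, iff_false, not_and]
      rintro ⟨z, rfl⟩
      have hx : (e f) z ∈ X := hf ⟨z, rfl⟩
      intro hc
      have hAmem : (e f) z ∈ ⋂ i, U i := hAU ▸ hXA hx
      exact hc (Set.mem_iInter.1 hAmem i)
  · ext b
    simp only [Set.mem_setOf_eq, Set.mem_diff, Set.mem_iUnion, Set.mem_preimage,
      Set.mem_compl_iff]
    constructor
    · rintro ⟨-, hbA⟩
      rw [hAU, Set.mem_iInter] at hbA
      push_neg at hbA
      exact hbA
    · rintro ⟨i, hi⟩
      exact ⟨b.2, fun h => hi (Set.mem_iInter.1 (hAU ▸ h) i)⟩
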